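/- arXiv:1302.4589 — 2 statements merged into one kernel-verified Lean document; each statement's English description precedes it below -/
import Mathlib

section
/- Let φ(x) = 1 + |x| on ℝ^n (where |x| is the Euclidean norm). For β > n, define Ψ(β) = ln(∏_{i=1}^n (β - i) · ∫_{ℝ^n} φ(x)^{-β} dx). Then Ψ(β) + Ψ(β+2) = 2Ψ(β+1) for all β > n+1, i.e. the reverse Hölder inequality (3.5) holds with equality for this φ. -/
open MeasureTheory Set Filter Real

private lemma aux_integrableOn (k : ℕ) (γ : ℝ) (h : (k : ℝ) + 1 < γ) :
    IntegrableOn (fun y : ℝ => y ^ k * (1 + y) ^ (-γ)) (Ioi 0) := by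
  have hmeas : AEStronglyMeasurable (fun y : ℝ => y ^ k * (1 + y) ^ (-γ))
      (volume.restrict (Ioi (1:ℝ))) := by
    apply ContinuousOn.aestronglyMeasurable ?_ measurableSet_Ioi
    apply ContinuousOn.mul (continuous_pow k).continuousOn
    apply ContinuousOn.rpow_const (by fun_prop)
    intro y hy
    left
    have h1 : (1:ℝ) < y := hy
    positivity
  have h1 : IntegrableOn (fun y : ℝ => y ^ k * (1 + y) ^ (-γ)) (Ioc 0 1) := by
    apply (ContinuousOn.integrableOn_Icc ?_).mono_set Ioc_subset_Icc_self
    apply ContinuousOn.mul (continuous_pow k).continuousOn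
    apply ContinuousOn.rpow_const (by fun_prop)
    intro y hy
    left
    have : (0:ℝ) ≤ y := hy.1
    positivity
  have h2 : IntegrableOn (fun y : ℝ => y ^ k * (1 + y) ^ (-γ)) (Ioi 1) := by
    have hb : IntegrableOn (fun y : ℝ => y ^ ((k : ℝ) - γ)) (Ioi 1) :=
      integrableOn_Ioi_rpow_of_lt (by linarith) one_pos
    refine hb.integrable.mono hmeas ?_
    filter_upwards [ae_restrict_mem measurableSet_Ioi] with y hy
    have hy1 : (1:ℝ) < y := hy
    have hy0 : (0:ℝ) < y := by linarith
    have h1y : (0:ℝ) < 1 + y := by linarith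
    rw [Real.norm_eq_abs, Real.norm_eq_abs, abs_of_nonneg (by positivity),
      abs_of_nonneg (by positivity)]
    have hle : (1 + y) ^ (-γ) ≤ y ^ (-γ) :=
      Real.rpow_le_rpow_of_nonpos hy0 (by linarith) (by linarith)
    calc y ^ k * (1 + y) ^ (-γ) ≤ y ^ k * y ^ (-γ) := by
          apply mul_le_mul_of_nonneg_left hle (by positivity)
      _ = y ^ ((k : ℝ) - γ) := by
          rw [← Real.rpow_natCast y k, ← Real.rpow_add hy0]; ring_nf
  have : Ioi (0:ℝ) = Ioc 0 1 ∪ Ioi 1 := (Ioc_union_Ioi_eq_Ioi zero_le_one).symm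
  rw [this]
  exact h1.union h2

private lemma radial_rel (n : ℕ) (hn : 1 ≤ n) (β : ℝ) (hβ : (n : ℝ) < β) :
    β * ∫ y in Ioi (0:ℝ), y ^ (n - 1) * (1 + y) ^ (-(β + 1))
      = (β - n) * ∫ y in Ioi (0:ℝ), y ^ (n - 1) * (1 + y) ^ (-β) := by
  have hn1 : ((n - 1 : ℕ) : ℝ) = (n : ℝ) - 1 := by
    have := Nat.cast_sub hn (R := ℝ); simpa using this
  have hnβ : (1:ℝ) ≤ (n : ℝ) := by exact_mod_cast hn
  -- integrabilities
  have hI1 : IntegrableOn (fun y : ℝ => y ^ (n - 1) * (1 + y) ^ (-β)) (Ioi 0) :=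
    aux_integrableOn (n - 1) β (by rw [hn1]; linarith)
  have hI2 : IntegrableOn (fun y : ℝ => y ^ (n - 1) * (1 + y) ^ (-(β + 1))) (Ioi 0) :=
    aux_integrableOn (n - 1) (β + 1) (by rw [hn1]; linarith)
  have hI3 : IntegrableOn (fun y : ℝ => y ^ n * (1 + y) ^ (-(β + 1))) (Ioi 0) :=
    aux_integrableOn n (β + 1) (by linarith)
  -- FTC for F y = y^n * (1+y)^(-β)
  set F : ℝ → ℝ := fun y => y ^ n * (1 + y) ^ (-β) with hF
  set F' : ℝ → ℝ := fun y =>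
    (n : ℝ) * (y ^ (n - 1) * (1 + y) ^ (-β)) + (-β) * (y ^ n * (1 + y) ^ (-(β + 1))) with hF'
  have hderiv : ∀ y ∈ Ici (0:ℝ), HasDerivAt F (F' y) y := by
    intro y hy
    have h1y : (0:ℝ) < 1 + y := by have : (0:ℝ) ≤ y := hy; linarith
    have d1 : HasDerivAt (fun y : ℝ => y ^ n) ((n : ℝ) * y ^ (n - 1)) y := hasDerivAt_pow n y
    have d2 := ((hasDerivAt_id y).const_add 1).rpow_const (p := -β) (Or.inl h1y.ne')
    have hd := d1.mul d2
    convert hd using 1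
    · rfl
    · rfl
    · rfl
    simp only [hF', id_eq]
    rw [show -β - 1 = -(β + 1) by ring]
    ring
  have hcont : ContinuousWithinAt F (Ici 0) 0 :=
    (hderiv 0 (self_mem_Ici)).continuousAt.continuousWithinAt
  have hint : IntegrableOn F' (Ioi 0) := (hI1.const_mul _).add (hI3.const_mul _)
  have htend : Tendsto F atTop (nhds 0) := by
    have hb : Tendsto (fun y : ℝ => y ^ ((n : ℝ) - β)) atTop (nhds 0) := by
      have := tendsto_rpow_neg_atTop (y := β - (n:ℝ)) (by linarith)
      simpa [neg_sub] using this
    apply squeeze_zero' ?_ ?_ hb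
    · filter_upwards [eventually_ge_atTop (1:ℝ)] with y hy
      have h1y : (0:ℝ) < 1 + y := by linarith
      positivity
    · filter_upwards [eventually_ge_atTop (1:ℝ)] with y hy
      have hy0 : (0:ℝ) < y := by linarith
      have hle : (1 + y) ^ (-β) ≤ y ^ (-β) :=
        Real.rpow_le_rpow_of_nonpos hy0 (by linarith) (by linarith)
      calc y ^ n * (1 + y) ^ (-β) ≤ y ^ n * y ^ (-β) :=
            mul_le_mul_of_nonneg_left hle (by positivity)
        _ = y ^ ((n : ℝ) - β) := by
            rw [← Real.rpow_natCast y n, ← Real.rpow_add hy0]; ring_nf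
  have hFTC : ∫ y in Ioi (0:ℝ), F' y = 0 - F 0 := by
    exact integral_Ioi_of_hasDerivAt_of_tendsto hcont (fun x hx => hderiv x (Ioi_subset_Ici_self hx)) hint htend
  have hF0 : F 0 = 0 := by
    simp [hF, zero_pow (by omega : n ≠ 0)]
  rw [hF0, sub_zero] at hFTC
  have hsplit : ∫ y in Ioi (0:ℝ), F' y
      = (n : ℝ) * (∫ y in Ioi (0:ℝ), y ^ (n - 1) * (1 + y) ^ (-β))
        + (-β) * (∫ y in Ioi (0:ℝ), y ^ n * (1 + y) ^ (-(β + 1))) := by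
    rw [integral_add (hI1.const_mul _) (hI3.const_mul _), integral_const_mul,
      integral_const_mul]
  -- pointwise: y^n (1+y)^{-(β+1)} = y^{n-1}(1+y)^{-β} - y^{n-1}(1+y)^{-(β+1)}
  have hpt : ∫ y in Ioi (0:ℝ), y ^ n * (1 + y) ^ (-(β + 1))
      = (∫ y in Ioi (0:ℝ), y ^ (n - 1) * (1 + y) ^ (-β))
        - ∫ y in Ioi (0:ℝ), y ^ (n - 1) * (1 + y) ^ (-(β + 1)) := by
    rw [← integral_sub hI1 hI2]
    apply setIntegral_congr_fun measurableSet_Ioi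
    intro y hy
    have hy0 : (0:ℝ) < y := hy
    have h1y : (0:ℝ) < 1 + y := by linarith
    simp only []
    have hpow : y ^ n = y ^ (n - 1) * y := by
      conv_lhs => rw [show n = (n - 1) + 1 by omega]
      rw [pow_succ]
    have hr : (1 + y) ^ (-β) = (1 + y) ^ (-(β + 1)) * (1 + y) := by
      rw [← Real.rpow_add_one h1y.ne']; ring_nf
    show y ^ n * (1 + y) ^ (-(β + 1)) = y ^ (n-1) * (1 + y) ^ (-β) - y ^ (n-1) * (1 + y) ^ (-(β + 1))
    rw [hpow, hr]; ring
  rw [hsplit, hpt] at hFTC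
  linarith [hFTC]

private lemma prod_rel (n : ℕ) (β : ℝ) :
    (β - n) * ∏ i ∈ Finset.Icc 1 n, (β + 1 - (i : ℝ))
      = β * ∏ i ∈ Finset.Icc 1 n, (β - (i : ℝ)) := by
  induction n with
  | zero => simp
  | succ m ih =>
    rw [Finset.prod_Icc_succ_top (Nat.le_add_left 1 m), Finset.prod_Icc_succ_top (Nat.le_add_left 1 m)]
    push_cast
    push_cast at ih
    linear_combination (β - ((m : ℝ) + 1)) * ih

private lemma int_rel (n : ℕ) (hn : 1 ≤ n) (β : ℝ) (hβ : (n : ℝ) < β) :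
    β * ∫ x : EuclideanSpace ℝ (Fin n), (1 + ‖x‖) ^ (-(β + 1))
      = (β - n) * ∫ x : EuclideanSpace ℝ (Fin n), (1 + ‖x‖) ^ (-β) := by
  haveI : Nontrivial (EuclideanSpace ℝ (Fin n)) :=
    Module.nontrivial_of_finrank_pos (R := ℝ)
      (by rw [finrank_euclideanSpace_fin]; omega)
  have key : ∀ γ : ℝ, ∫ x : EuclideanSpace ℝ (Fin n), (1 + ‖x‖) ^ (-γ)
      = (n : ℝ) * ((volume (Metric.ball (0 : EuclideanSpace ℝ (Fin n)) 1)).toReal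
          * ∫ y in Ioi (0:ℝ), y ^ (n - 1) * (1 + y) ^ (-γ)) := by
    intro γ
    have := integral_fun_norm_addHaar (volume : Measure (EuclideanSpace ℝ (Fin n)))
      (fun r : ℝ => (1 + r) ^ (-γ))
    rw [this]
    simp [finrank_euclideanSpace_fin, nsmul_eq_mul, smul_eq_mul, mul_assoc, measureReal_def]
  rw [key, key]
  have := radial_rel n hn β hβ
  set c := (volume (Metric.ball (0 : EuclideanSpace ℝ (Fin n)) 1)).toReal
  set J1 := ∫ y in Ioi (0:ℝ), y ^ (n - 1) * (1 + y) ^ (-(β + 1))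
  set J2 := ∫ y in Ioi (0:ℝ), y ^ (n - 1) * (1 + y) ^ (-β)
  linear_combination ((n : ℝ) * c) * this

theorem equality_case_reverse_holder (n : ℕ) (hn : 1 ≤ n) (Ψ : ℝ → ℝ)
    (hΨ : ∀ β : ℝ, Ψ β = Real.log ((∏ i ∈ Finset.Icc 1 n, (β - (i : ℝ))) *
      ∫ x : EuclideanSpace ℝ (Fin n), (1 + ‖x‖) ^ (-β))) :
    ∀ β : ℝ, β > n + 1 → Ψ β + Ψ (β + 2) = 2 * Ψ (β + 1) := by
  have key : ∀ β : ℝ, (n : ℝ) < β →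
      (∏ i ∈ Finset.Icc 1 n, (β + 1 - (i : ℝ))) *
        ∫ x : EuclideanSpace ℝ (Fin n), (1 + ‖x‖) ^ (-(β + 1))
      = (∏ i ∈ Finset.Icc 1 n, (β - (i : ℝ))) *
        ∫ x : EuclideanSpace ℝ (Fin n), (1 + ‖x‖) ^ (-β) := by
    intro β hβ
    have hβ0 : β ≠ 0 := (lt_of_le_of_lt (Nat.cast_nonneg n) hβ).ne'
    apply mul_left_cancel₀ hβ0
    have h1 := int_rel n hn β hβ
    have h2 := prod_rel n β
    set P1 := ∏ i ∈ Finset.Icc 1 n, (β + 1 - (i : ℝ))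
    set P2 := ∏ i ∈ Finset.Icc 1 n, (β - (i : ℝ))
    set I1 := ∫ x : EuclideanSpace ℝ (Fin n), (1 + ‖x‖) ^ (-(β + 1))
    set I2 := ∫ x : EuclideanSpace ℝ (Fin n), (1 + ‖x‖) ^ (-β)
    calc β * (P1 * I1) = P1 * (β * I1) := by ring
      _ = P1 * ((β - n) * I2) := by rw [h1]
      _ = ((β - n) * P1) * I2 := by ring
      _ = (β * P2) * I2 := by rw [h2]
      _ = β * (P2 * I2) := by ring
  intro β hβ
  have hn' : (1:ℝ) ≤ n := by exact_mod_cast hn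
  have e1 := key β (by linarith)
  have e2 := key (β + 1) (by linarith)
  rw [show β + 1 + 1 = β + 2 by ring] at e2
  rw [hΨ β, hΨ (β + 1), hΨ (β + 2), e1, e2, e1]
  ring
end

section
/- The constant 1/(2(β-1)) in the weighted Poincaré inequality for the Cauchy measure τ_β is sharp: for f(x) = ⟨v₀, x⟩ with v₀ ∈ ℝ^n fixed and β ≥ n+1, one has Var_{τ_β}(f) = (1/(2(β-1))) ∫ |∇f|²(1+|x|²) dτ_β. -/
open MeasureTheory

open Real Filter Set


lemma oneD_hasDerivAt (a β : ℝ) (ha : 0 < a) (t : ℝ) :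
    HasDerivAt (fun t : ℝ => t * (a + t ^ 2) ^ (1 - β))
      ((a + t ^ 2) ^ (1 - β) - (2 * (β - 1)) * (t ^ 2 * (a + t ^ 2) ^ (-β))) t := by
  have hbase : HasDerivAt (fun t : ℝ => a + t ^ 2) (2 * t) t := by
    simpa using ((hasDerivAt_pow 2 t).const_add a)
  have hpos : (0:ℝ) < a + t ^ 2 := by positivity
  have h1 : HasDerivAt (fun t : ℝ => (a + t ^ 2) ^ (1 - β))
      (2 * t * (1 - β) * (a + t ^ 2) ^ (1 - β - 1)) t :=
    hbase.rpow_const (Or.inl hpos.ne')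
  have h2 := (hasDerivAt_id t).mul h1
  refine HasDerivAt.congr_deriv (f := fun t : ℝ => t * (a + t ^ 2) ^ (1 - β)) h2 ?_
  have he : (1 : ℝ) - β - 1 = -β := by ring
  rw [he]
  have h3 : (a + t^2) ^ (1-β) = (a + t^2) * (a + t^2)^(-β) := by
    rw [show (1:ℝ)-β = 1 + (-β) by ring, Real.rpow_add hpos, Real.rpow_one]
  rw [h3]; simp only [id_eq]; ring

lemma oneD_tendsto_atTop (a β : ℝ) (ha : 0 < a) (hβ : 2 ≤ β) :
    Tendsto (fun t : ℝ => t * (a + t ^ 2) ^ (1 - β)) atTop (nhds 0) := by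
  have h2 : Tendsto (fun t : ℝ => t ^ (3 - 2*β)) atTop (nhds 0) := by
    simpa using tendsto_rpow_neg_atTop (y := 2*β - 3) (by linarith)
  refine squeeze_zero' ?_ ?_ h2
  · filter_upwards [eventually_ge_atTop (0:ℝ)] with t ht
    positivity
  · filter_upwards [eventually_ge_atTop (1:ℝ)] with t ht
    have ht0 : (0:ℝ) < t := by linarith
    have h4 : t ^ 2 ≤ a + t ^ 2 := by linarith
    have h5 : (a + t ^ 2) ^ (1 - β) ≤ (t ^ 2) ^ (1 - β) := by
      apply Real.rpow_le_rpow_of_nonpos (by positivity) h4 (by linarith)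
    calc t * (a + t ^ 2) ^ (1 - β) ≤ t * (t ^ 2) ^ (1 - β) := by
          exact mul_le_mul_of_nonneg_left h5 ht0.le
      _ = t ^ (3 - 2*β) := by
          rw [← Real.rpow_natCast t 2, ← Real.rpow_mul ht0.le]
          nth_rewrite 1 [← Real.rpow_one t]
          rw [← Real.rpow_add ht0]
          norm_num
          ring_nf

lemma cont_rpow_aux (a c : ℝ) (ha : 0 < a) :
    Continuous (fun t : ℝ => (a + t ^ 2) ^ c) :=
  (continuous_const.add (continuous_pow 2)).rpow_const (fun t => Or.inl (add_pos_of_pos_of_nonneg ha (sq_nonneg t)).ne')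

lemma oneD_integrable_base (β : ℝ) (hβ : 2 ≤ β) :
    Integrable (fun t : ℝ => (1 + t ^ 2) ^ (1 - β)) := by
  have h := integrable_rpow_neg_one_add_norm_sq (E := ℝ) (μ := volume)
    (r := 2 * (β - 1)) (by simp; linarith)
  have he : -(2 * (β - 1)) / 2 = 1 - β := by ring
  simpa [Real.norm_eq_abs, sq_abs, he] using h

lemma oneD_integrable_one (a β : ℝ) (ha : 1 ≤ a) (hβ : 2 ≤ β) :
    Integrable (fun t : ℝ => (a + t ^ 2) ^ (1 - β)) := by
  refine (oneD_integrable_base β hβ).mono'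
    ((cont_rpow_aux a (1-β) (by linarith)).aestronglyMeasurable) ?_
  filter_upwards with t
  have h1 : (0:ℝ) < 1 + t ^ 2 := by positivity
  rw [Real.norm_eq_abs, abs_of_nonneg (Real.rpow_nonneg (by positivity) _)]
  exact Real.rpow_le_rpow_of_nonpos h1 (by linarith) (by linarith)

lemma oneD_integrable_two (a β : ℝ) (ha : 1 ≤ a) (hβ : 2 ≤ β) :
    Integrable (fun t : ℝ => t ^ 2 * (a + t ^ 2) ^ (-β)) := by
  have ha0 : (0:ℝ) < a := by linarith
  refine (oneD_integrable_one a β ha hβ).mono'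
    ((continuous_pow 2).mul (cont_rpow_aux a (-β) ha0) |>.aestronglyMeasurable) ?_
  filter_upwards with t
  have hpos : (0:ℝ) < a + t ^ 2 := by positivity
  rw [Real.norm_eq_abs, abs_of_nonneg (by positivity)]
  calc t ^ 2 * (a + t ^ 2) ^ (-β) ≤ (a + t ^ 2) * (a + t ^ 2) ^ (-β) := by
        apply mul_le_mul_of_nonneg_right (by nlinarith) (Real.rpow_nonneg hpos.le _)
    _ = (a + t ^ 2) ^ (1 - β) := by
        rw [show (1:ℝ)-β = 1 + (-β) by ring, Real.rpow_add hpos, Real.rpow_one]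

lemma oneD_identity (a β : ℝ) (ha : 1 ≤ a) (hβ : 2 ≤ β) :
    2 * (β - 1) * ∫ t : ℝ, t ^ 2 * (a + t ^ 2) ^ (-β) =
      ∫ t : ℝ, (a + t ^ 2) ^ (1 - β) := by
  have ha0 : (0:ℝ) < a := by linarith
  have hint1 := oneD_integrable_one a β ha hβ
  have hint2 := oneD_integrable_two a β ha hβ
  have hzero : ∫ t : ℝ, ((a + t ^ 2) ^ (1 - β) -
      (2 * (β - 1)) * (t ^ 2 * (a + t ^ 2) ^ (-β))) = 0 := by
    have := integral_of_hasDerivAt_of_tendsto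
      (f := fun t : ℝ => t * (a + t ^ 2) ^ (1 - β))
      (f' := fun t : ℝ => (a + t ^ 2) ^ (1 - β) -
        (2 * (β - 1)) * (t ^ 2 * (a + t ^ 2) ^ (-β)))
      (m := 0) (n := 0)
      (fun t => oneD_hasDerivAt a β ha0 t)
      (hint1.sub (hint2.const_mul _)) ?_ (oneD_tendsto_atTop a β ha0 hβ)
    · simpa using this
    · have h1 := oneD_tendsto_atTop a β ha0 hβ
      have h2 : Tendsto (fun t : ℝ => -((-t) * (a + (-t) ^ 2) ^ (1 - β))) atBot (nhds 0) := by
        simpa using (h1.comp tendsto_neg_atBot_atTop).neg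
      refine h2.congr (fun t => ?_)
      simp [neg_sq]
  have hsplit := integral_sub hint1 (hint2.const_mul (2 * (β - 1)))
  rw [hsplit, MeasureTheory.integral_const_mul] at hzero
  linarith


lemma eucl_norm_sq (n : ℕ) (x : EuclideanSpace ℝ (Fin n)) : ‖x‖ ^ 2 = ∑ i, x i ^ 2 := by
  rw [EuclideanSpace.norm_eq, Real.sq_sqrt (by positivity)]
  simp [sq_abs]

lemma eucl_int_one (n : ℕ) (β : ℝ) (h : (n : ℝ) < 2 * (β - 1)) :
    Integrable (fun x : EuclideanSpace ℝ (Fin n) => (1 + ‖x‖ ^ 2) ^ (1 - β)) := by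
  have h0 := integrable_rpow_neg_one_add_norm_sq (E := EuclideanSpace ℝ (Fin n))
    (μ := volume) (r := 2 * (β - 1)) (by rw [finrank_euclideanSpace_fin]; exact h)
  have he : -(2 * (β - 1)) / 2 = 1 - β := by ring
  simpa [he] using h0

lemma eucl_int_base (n : ℕ) (β : ℝ) (h : (n : ℝ) < 2 * β) :
    Integrable (fun x : EuclideanSpace ℝ (Fin n) => (1 + ‖x‖ ^ 2) ^ (-β)) := by
  have h0 := integrable_rpow_neg_one_add_norm_sq (E := EuclideanSpace ℝ (Fin n))
    (μ := volume) (r := 2 * β) (by rw [finrank_euclideanSpace_fin]; exact h)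
  have he : -(2 * β) / 2 = -β := by ring
  simpa [he] using h0

lemma eucl_int_sq (m : ℕ) (β : ℝ) (h : ((m+1 : ℕ) : ℝ) < 2 * (β - 1)) :
    Integrable (fun x : EuclideanSpace ℝ (Fin (m+1)) =>
      (x 0 : ℝ) ^ 2 * (1 + ‖x‖ ^ 2) ^ (-β)) := by
  refine (eucl_int_one (m+1) β h).mono' ?_ ?_
  · have hc1 : Continuous (fun x : EuclideanSpace ℝ (Fin (m+1)) => (x 0 : ℝ)) := by
      exact (EuclideanSpace.proj (0 : Fin (m+1))).continuous
    have hc2 : Continuous (fun x : EuclideanSpace ℝ (Fin (m+1)) => (1 + ‖x‖ ^ 2) ^ (-β)) :=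
      (continuous_const.add ((continuous_norm).pow 2)).rpow_const
        (fun x => Or.inl (add_pos_of_pos_of_nonneg one_pos (sq_nonneg _)).ne')
    exact ((hc1.pow 2).mul hc2).aestronglyMeasurable
  · filter_upwards with x
    have hpos : (0:ℝ) < 1 + ‖x‖ ^ 2 := by positivity
    rw [Real.norm_eq_abs, abs_of_nonneg (by positivity)]
    have hx0 : (x 0 : ℝ) ^ 2 ≤ ‖x‖ ^ 2 := by
      rw [eucl_norm_sq]
      exact Finset.single_le_sum (f := fun i => (x i : ℝ) ^ 2)
        (fun i _ => by positivity) (Finset.mem_univ 0)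
    calc (x 0 : ℝ) ^ 2 * (1 + ‖x‖ ^ 2) ^ (-β)
        ≤ (1 + ‖x‖ ^ 2) * (1 + ‖x‖ ^ 2) ^ (-β) := by
          apply mul_le_mul_of_nonneg_right (by nlinarith) (Real.rpow_nonneg hpos.le _)
      _ = (1 + ‖x‖ ^ 2) ^ (1 - β) := by
          rw [show (1:ℝ) - β = 1 + (-β) by ring, Real.rpow_add hpos, Real.rpow_one]


lemma vol_prod_eq (m : ℕ) :
    (volume : Measure (ℝ × (Fin m → ℝ))) =
      (volume : Measure ℝ).prod (Measure.pi fun _ => volume) := by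
  rw [Measure.volume_eq_prod, volume_pi]

lemma pi_succ_integral (m : ℕ) (F : (Fin (m+1) → ℝ) → ℝ) :
    ∫ y : Fin (m+1) → ℝ, F y =
      ∫ z : ℝ × (Fin m → ℝ), F (Fin.cons z.1 z.2) := by
  have hmp := (measurePreserving_piFinSuccAbove
    (fun _ : Fin (m+1) => (volume : Measure ℝ)) 0).symm
  rw [volume_pi, ← hmp.integral_comp']
  rw [← vol_prod_eq m]
  congr 1
  ext z
  congr 1
  simp [MeasurableEquiv.piFinSuccAbove_symm_apply, Fin.insertNthEquiv, Fin.insertNth_zero]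

lemma pi_succ_integrable (m : ℕ) (F : (Fin (m+1) → ℝ) → ℝ) (hF : Integrable F) :
    Integrable (fun z : ℝ × (Fin m → ℝ) => F (Fin.cons z.1 z.2)) := by
  have hmp := (measurePreserving_piFinSuccAbove
    (fun _ : Fin (m+1) => (volume : Measure ℝ)) 0).symm
  rw [volume_pi] at hF
  have h2 := (hmp.integrable_comp_emb (MeasurableEquiv.measurableEmbedding _)).mpr hF
  rw [vol_prod_eq m]
  refine h2.congr (Eventually.of_forall fun z => ?_)
  simp [Function.comp, MeasurableEquiv.piFinSuccAbove_symm_apply, Fin.insertNthEquiv,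
    Fin.insertNth_zero]

lemma eucl_key (m : ℕ) (β : ℝ) (hβ : 2 ≤ β) (h1 : ((m+1 : ℕ) : ℝ) < 2 * (β - 1)) :
    2 * (β - 1) * ∫ x : EuclideanSpace ℝ (Fin (m+1)), (x 0 : ℝ) ^ 2 * (1 + ‖x‖ ^ 2) ^ (-β)
      = ∫ x : EuclideanSpace ℝ (Fin (m+1)), (1 + ‖x‖ ^ 2) ^ (1 - β) := by
  set G : (Fin (m+1) → ℝ) → ℝ := fun y => (y 0) ^ 2 * (1 + ∑ i, y i ^ 2) ^ (-β) with hG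
  set H : (Fin (m+1) → ℝ) → ℝ := fun y => (1 + ∑ i, y i ^ 2) ^ (1 - β) with hH
  have hψ := EuclideanSpace.volume_preserving_symm_measurableEquiv_toLp (Fin (m+1))
  have eG : ∫ x : EuclideanSpace ℝ (Fin (m+1)), (x 0 : ℝ) ^ 2 * (1 + ‖x‖ ^ 2) ^ (-β)
      = ∫ y, G y := by
    rw [← hψ.integral_comp' G]
    refine integral_congr_ae (Eventually.of_forall fun x => ?_)
    simp only [eucl_norm_sq]; rfl
  have eH : ∫ x : EuclideanSpace ℝ (Fin (m+1)), (1 + ‖x‖ ^ 2) ^ (1 - β)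
      = ∫ y, H y := by
    rw [← hψ.integral_comp' H]
    refine integral_congr_ae (Eventually.of_forall fun x => ?_)
    simp only [eucl_norm_sq]; rfl
  have hGint : Integrable G := by
    refine (hψ.integrable_comp_emb (MeasurableEquiv.measurableEmbedding _)).mp ?_
    refine (eucl_int_sq m β h1).congr (Eventually.of_forall fun x => ?_)
    simp only [eucl_norm_sq, Function.comp]; rfl
  have hHint : Integrable H := by
    refine (hψ.integrable_comp_emb (MeasurableEquiv.measurableEmbedding _)).mp ?_
    refine (eucl_int_one (m+1) β h1).congr (Eventually.of_forall fun x => ?_)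
    simp only [eucl_norm_sq, Function.comp]; rfl
  have hGP := pi_succ_integrable m G hGint
  have hHP := pi_succ_integrable m H hHint
  have eg2 : ∫ y, G y = ∫ y : Fin m → ℝ, ∫ t : ℝ, G (Fin.cons t y) := by
    rw [pi_succ_integral m G, vol_prod_eq m]
    exact integral_prod_symm _ (by rwa [← vol_prod_eq m])
  have eh2 : ∫ y, H y = ∫ y : Fin m → ℝ, ∫ t : ℝ, H (Fin.cons t y) := by
    rw [pi_succ_integral m H, vol_prod_eq m]
    exact integral_prod_symm _ (by rwa [← vol_prod_eq m])
  rw [eG, eH, eg2, eh2, ← MeasureTheory.integral_const_mul]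
  refine integral_congr_ae (Eventually.of_forall fun y => ?_)
  have hS : (0:ℝ) ≤ ∑ i, y i ^ 2 := by positivity
  have ha : (1:ℝ) ≤ 1 + ∑ i, y i ^ 2 := by linarith
  calc 2 * (β - 1) * ∫ t : ℝ, G (Fin.cons t y)
      = 2 * (β - 1) * ∫ t : ℝ, t ^ 2 * ((1 + ∑ i, y i ^ 2) + t ^ 2) ^ (-β) := by
        congr 1
        refine integral_congr_ae (Eventually.of_forall fun t => ?_)
        have hb : (1 + ∑ i : Fin (m+1), (Fin.cons t y : Fin (m+1) → ℝ) i ^ 2)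
            = (1 + ∑ i, y i ^ 2) + t ^ 2 := by
          rw [Fin.sum_univ_succ]
          simp only [Fin.cons_zero, Fin.cons_succ]
          ring
        simp only [hG, Fin.cons_zero, hb]
    _ = ∫ t : ℝ, ((1 + ∑ i, y i ^ 2) + t ^ 2) ^ (1 - β) :=
        oneD_identity _ β ha hβ
    _ = ∫ t : ℝ, H (Fin.cons t y) := by
        refine integral_congr_ae (Eventually.of_forall fun t => ?_)
        have hb : (1 + ∑ i : Fin (m+1), (Fin.cons t y : Fin (m+1) → ℝ) i ^ 2)
            = (1 + ∑ i, y i ^ 2) + t ^ 2 := by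
          rw [Fin.sum_univ_succ]
          simp only [Fin.cons_zero, Fin.cons_succ]
          ring
        simp only [hH, Fin.cons_zero, hb]

theorem weighted_poincare_cauchy_sharp (n : ℕ) (β : ℝ) (hβ : β ≥ n + 1)
    (v₀ : EuclideanSpace ℝ (Fin n))
    (Z : ℝ) (hZ : Z = ∫ x : EuclideanSpace ℝ (Fin n), (1 + ‖x‖ ^ 2) ^ (-β)) :
    (∫ x : EuclideanSpace ℝ (Fin n), (inner ℝ v₀ x : ℝ) ^ 2 * ((1 + ‖x‖ ^ 2) ^ (-β) / Z)) -
      (∫ x : EuclideanSpace ℝ (Fin n), (inner ℝ v₀ x : ℝ) * ((1 + ‖x‖ ^ 2) ^ (-β) / Z)) ^ 2 =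
      (1 / (2 * (β - 1))) *
        ∫ x : EuclideanSpace ℝ (Fin n), ‖v₀‖ ^ 2 * (1 + ‖x‖ ^ 2) * ((1 + ‖x‖ ^ 2) ^ (-β) / Z) := by

  by_cases hv : v₀ = 0
  · simp [hv]
  -- n = m + 1
  have hn : n ≠ 0 := by
    rintro rfl
    exact hv (Subsingleton.elim v₀ 0)
  obtain ⟨m, rfl⟩ : ∃ m, n = m + 1 := ⟨n - 1, (Nat.succ_pred_eq_of_pos (Nat.pos_of_ne_zero hn)).symm⟩
  have hβ2 : (2:ℝ) ≤ β := by
    have : ((m:ℝ) + 1 + 1) ≤ β := by push_cast at hβ ⊢; linarith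
    nlinarith [Nat.cast_nonneg (α := ℝ) m]
  have hβ1 : β - 1 ≠ 0 := by linarith
  -- mean is zero
  have hmean : (∫ x : EuclideanSpace ℝ (Fin (m+1)),
      (inner ℝ v₀ x : ℝ) * ((1 + ‖x‖ ^ 2) ^ (-β) / Z)) = 0 := by
    set f : EuclideanSpace ℝ (Fin (m+1)) → ℝ :=
      fun x => (inner ℝ v₀ x : ℝ) * ((1 + ‖x‖ ^ 2) ^ (-β) / Z) with hf
    have h1 : ∫ x, f (-x) = ∫ x, f x := integral_neg_eq_self f volume
    have h2 : ∀ x, f (-x) = - f x := by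
      intro x
      simp [hf, inner_neg_right]
    rw [integral_congr_ae (Eventually.of_forall h2), integral_neg] at h1
    linarith
  rw [hmean]
  -- orthonormal basis with b 0 = u
  set u : EuclideanSpace ℝ (Fin (m+1)) := ‖v₀‖⁻¹ • v₀ with hu
  have hnv : ‖v₀‖ ≠ 0 := norm_ne_zero_iff.mpr hv
  have hun : ‖u‖ = 1 := by
    rw [hu, norm_smul, norm_inv, norm_norm, inv_mul_cancel₀ hnv]
  have hortho : Orthonormal ℝ (Set.restrict {(0 : Fin (m+1))} (fun _ => u)) := by
    constructor
    · intro i; exact hun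
    · intro i j hij
      exact absurd (Subsingleton.elim i j) hij
  obtain ⟨b, hb⟩ := hortho.exists_orthonormalBasis_extension_of_card_eq
    (by simp [finrank_euclideanSpace_fin])
  have hb0 : b 0 = u := hb 0 rfl
  have hinner : ∀ x : EuclideanSpace ℝ (Fin (m+1)),
      (inner ℝ v₀ x : ℝ) = ‖v₀‖ * (b.repr x 0) := by
    intro x
    rw [b.repr_apply_apply, hb0, hu, real_inner_smul_left]
    have : ‖v₀‖ * (‖v₀‖⁻¹ * (inner ℝ v₀ x : ℝ)) = (‖v₀‖ * ‖v₀‖⁻¹) * (inner ℝ v₀ x : ℝ) := by ring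
    rw [this, mul_inv_cancel₀ hnv, one_mul]
  have hAsub : (∫ x : EuclideanSpace ℝ (Fin (m+1)), (b.repr x 0 : ℝ) ^ 2 * (1 + ‖x‖ ^ 2) ^ (-β))
      = ∫ y : EuclideanSpace ℝ (Fin (m+1)), (y 0 : ℝ) ^ 2 * (1 + ‖y‖ ^ 2) ^ (-β) := by
    have hmp := b.measurePreserving_repr
    rw [← hmp.integral_comp (b.repr.toHomeomorph.measurableEmbedding)
      (fun y => (y 0 : ℝ) ^ 2 * (1 + ‖y‖ ^ 2) ^ (-β))]
    refine integral_congr_ae (Eventually.of_forall fun x => ?_)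
    simp
  have hkey := eucl_key m β hβ2 (by push_cast; push_cast at hβ; linarith)
  set I := ∫ y : EuclideanSpace ℝ (Fin (m+1)), (y 0 : ℝ) ^ 2 * (1 + ‖y‖ ^ 2) ^ (-β) with hI
  set B := ∫ y : EuclideanSpace ℝ (Fin (m+1)), (1 + ‖y‖ ^ 2) ^ (1 - β) with hB
  have hvar : (∫ x : EuclideanSpace ℝ (Fin (m+1)),
      (inner ℝ v₀ x : ℝ) ^ 2 * ((1 + ‖x‖ ^ 2) ^ (-β) / Z)) = ‖v₀‖ ^ 2 * I / Z := by
    have hpt : ∀ x : EuclideanSpace ℝ (Fin (m+1)),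
        (inner ℝ v₀ x : ℝ) ^ 2 * ((1 + ‖x‖ ^ 2) ^ (-β) / Z)
        = (‖v₀‖ ^ 2 * ((b.repr x 0 : ℝ) ^ 2 * (1 + ‖x‖ ^ 2) ^ (-β))) / Z := by
      intro x; rw [hinner x]; ring
    rw [integral_congr_ae (Eventually.of_forall hpt), integral_div, integral_const_mul, hAsub]
  have hrhs : (∫ x : EuclideanSpace ℝ (Fin (m+1)),
      ‖v₀‖ ^ 2 * (1 + ‖x‖ ^ 2) * ((1 + ‖x‖ ^ 2) ^ (-β) / Z)) = ‖v₀‖ ^ 2 * B / Z := by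
    have hpt : ∀ x : EuclideanSpace ℝ (Fin (m+1)),
        ‖v₀‖ ^ 2 * (1 + ‖x‖ ^ 2) * ((1 + ‖x‖ ^ 2) ^ (-β) / Z)
        = (‖v₀‖ ^ 2 * (1 + ‖x‖ ^ 2) ^ (1 - β)) / Z := by
      intro x
      have hpos : (0:ℝ) < 1 + ‖x‖ ^ 2 := by positivity
      rw [show (1:ℝ) - β = 1 + (-β) by ring, Real.rpow_add hpos, Real.rpow_one]
      ring
    rw [integral_congr_ae (Eventually.of_forall hpt), integral_div, integral_const_mul]
  rw [hvar, hrhs, ← hkey]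
  have h2β : (2 : ℝ) * (β - 1) ≠ 0 := mul_ne_zero two_ne_zero hβ1
  have hre : ‖v₀‖ ^ 2 * (2 * (β - 1) * I) / Z = (2 * (β - 1)) * (‖v₀‖ ^ 2 * I / Z) := by
    ring
  rw [hre, one_div, inv_mul_cancel_left₀ h2β]
  ring
end
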